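/- Let J : [0,1]^ℕ → ∏_{n≥1} {0,1,…,n−1} be the map J(x) = (t_n(x))_{n≥1}, where t_n(x) = #{k ≤ n : x_k < x_n}. Then J is measurable and the pushforward of the product Lebesgue measure m^∞ under J equals the product measure μ = ∏_{n≥1} (uniform measure on {0,1,…,n−1}). Equivalently, the random variables t_1, t_2, t_3, … are mutually independent and t_n is uniform on {0,…,n−1}. -/

import Mathlib

open MeasureTheory unitInterval

/-- The infinite product of Lebesgue measures on `[0,1]^ℕ`, characterized as the projective
limit of the finite-dimensional product Lebesgue measures. -/
def IsProductLebesgue (μ : Measure (ℕ → I)) : Prop :=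
  IsProjectiveLimit μ (fun J : Finset ℕ => Measure.pi fun _ : J => (volume : Measure I))

/-- `tCode x n = #{k < n : x k < x n}` is, in 0-based indexing, the quantity
`t_{n+1}(x) = #{k ≤ n+1 : x_k < x_{n+1}}` of the paper; it takes values in `{0, 1, …, n}`. -/
noncomputable def tCode (x : ℕ → I) (n : ℕ) : ℕ :=
  ((Finset.range n).filter fun k => (x k : ℝ) < (x n : ℝ)).card

/-- The combinatorial encoding `J : [0,1]^ℕ → 𝔐 = ∏_n {0,…,n}`, `J(x) = (t_n(x))_n`. -/
noncomputable def JCode (x : ℕ → I) (n : ℕ) : Fin (n + 1) :=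
  ⟨tCode x n, Nat.lt_succ_of_le ((Finset.card_filter_le _ _).trans (Finset.card_range n).le)⟩

/-- The uniform probability measure on `{0, 1, …, n}`. -/
noncomputable def uniformFin (n : ℕ) : Measure (Fin (n + 1)) :=
  (PMF.uniformOfFintype (Fin (n + 1))).toMeasure

open scoped ENNReal

section Core

variable {N : ℕ}


def permCode (pp : Equiv.Perm (Fin N)) (n : Fin N) : ℕ :=
  (Finset.univ.filter fun k => k < n ∧ pp k < pp n).card

lemma permCode_le (pp : Equiv.Perm (Fin N)) (n : Fin N) : permCode pp n ≤ (n : ℕ) := by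
  have h1 : (Finset.univ.filter fun k => k < n ∧ pp k < pp n) ⊆ Finset.Iio n := by
    intro k hk
    simp only [Finset.mem_filter] at hk
    exact Finset.mem_Iio.2 hk.2.1
  exact (Finset.card_le_card h1).trans (by rw [Fin.card_Iio])

lemma permCode_key (pp pp' : Equiv.Perm (Fin N)) (n : Fin N)
    (hgt : ∀ m, n < m → pp m = pp' m) (hc : permCode pp n = permCode pp' n)
    (hlt : pp n < pp' n) : False := by
  classical
  set S : Finset (Fin N) := Finset.univ.filter (· < n) with hS
  have hcode : ∀ ρ : Equiv.Perm (Fin N),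
      permCode ρ n = ((S.image ρ).filter (· < ρ n)).card := by
    intro ρ
    have h2 : permCode ρ n = (S.filter fun k => ρ k < ρ n).card := by
      unfold permCode; rw [hS, Finset.filter_filter]
    rw [h2, ← Finset.card_image_of_injective _ ρ.injective, Finset.filter_image]
  have himg : S.image pp' = insert (pp n) ((S.image pp).erase (pp' n)) := by
    ext v
    simp only [Finset.mem_insert, Finset.mem_erase, Finset.mem_image, hS,
      Finset.mem_filter, Finset.mem_univ, true_and]
    constructor
    · rintro ⟨k, hk, rfl⟩
      rcases lt_trichotomy (pp.symm (pp' k)) n with h | h | h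
      · refine Or.inr ⟨fun he => (ne_of_lt hk) (pp'.injective he), pp.symm (pp' k), h,
          pp.apply_symm_apply _⟩
      · exact Or.inl (by rw [← pp.apply_symm_apply (pp' k), h])
      · exfalso
        have : pp (pp.symm (pp' k)) = pp' (pp.symm (pp' k)) := hgt _ h
        rw [pp.apply_symm_apply] at this
        exact (ne_of_gt (hk.trans h)) (pp'.injective this.symm)
    · rintro (rfl | ⟨hne, k, hk, rfl⟩)
      · rcases lt_trichotomy (pp'.symm (pp n)) n with h | h | h
        · exact ⟨_, h, pp'.apply_symm_apply _⟩
        · exfalso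
          have : pp' (pp'.symm (pp n)) = pp n := pp'.apply_symm_apply _
          rw [h] at this
          exact (ne_of_gt hlt) this
        · exfalso
          have h2 : pp (pp'.symm (pp n)) = pp' (pp'.symm (pp n)) := hgt _ h
          rw [pp'.apply_symm_apply] at h2
          exact (ne_of_gt h) (pp.injective h2)
      · rcases lt_trichotomy (pp'.symm (pp k)) n with h | h | h
        · exact ⟨_, h, pp'.apply_symm_apply _⟩
        · exact absurd (by rw [← pp'.apply_symm_apply (pp k), h]) hne.symm
        · exfalso
          have h2 : pp (pp'.symm (pp k)) = pp' (pp'.symm (pp k)) := hgt _ h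
          rw [pp'.apply_symm_apply] at h2
          exact (ne_of_gt (hk.trans h)) (pp.injective h2)
  -- now count
  have hppn_not : pp n ∉ (S.image pp).erase (pp' n) := by
    intro h
    obtain ⟨k, hk, hke⟩ := Finset.mem_image.1 (Finset.mem_of_mem_erase h)
    rw [hS, Finset.mem_filter] at hk
    exact (ne_of_lt hk.2) (pp.injective hke)
  have hkey : permCode pp' n = ((S.image pp).filter (· < pp' n)).card + 1 := by
    rw [hcode pp', himg]
    rw [Finset.filter_insert, if_pos hlt]
    rw [Finset.card_insert_of_notMem (fun h => hppn_not (Finset.mem_of_mem_filter _ h))]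
    congr 1
    rw [Finset.filter_erase, Finset.erase_eq_of_notMem]
    · intro h
      exact absurd (Finset.mem_filter.1 h).2 (lt_irrefl _)
  have hmono : ((S.image pp).filter (· < pp n)).card ≤ ((S.image pp).filter (· < pp' n)).card :=
    Finset.card_le_card (fun v hv => by
      simp only [Finset.mem_filter] at hv ⊢; exact ⟨hv.1, hv.2.trans hlt⟩)
  rw [hcode pp] at hc
  omega
lemma permCode_injective (pp pp' : Equiv.Perm (Fin N))
    (hc : ∀ n, permCode pp n = permCode pp' n) : pp = pp' := by
  classical
  have key : ∀ n : Fin N, (∀ m, n < m → pp m = pp' m) → pp n = pp' n := by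
    intro n hgt
    rcases lt_trichotomy (pp n) (pp' n) with h | h | h
    · exact absurd (permCode_key pp pp' n hgt (hc n) h) not_false
    · exact h
    · exact absurd (permCode_key pp' pp n (fun m hm => (hgt m hm).symm) (hc n).symm h) not_false
  have main : ∀ j : ℕ, ∀ n : Fin N, N - (n : ℕ) ≤ j → pp n = pp' n := by
    intro j
    induction j with
    | zero => intro n hn; omega
    | succ j ih =>
      intro n hn
      exact key n (fun m hm => ih m (by omega))
  exact Equiv.ext fun n => main N n (by omega)


instance : NullSingletonClass (volume : Measure I) := by
  constructor
  intro a
  rw [unitInterval.volume_def,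
    MeasurableEmbedding.comap_apply (MeasurableEmbedding.subtype_coe measurableSet_Icc),
    Set.image_singleton]
  exact measure_singleton _

noncomputable def codeF (y : Fin N → I) (n : Fin N) : ℕ :=
  (Finset.univ.filter fun k => k < n ∧ (y k : ℝ) < (y n : ℝ)).card

lemma measurable_coord (k : Fin N) : Measurable fun y : Fin N → I => (y k : ℝ) :=
  continuous_subtype_val.measurable.comp (measurable_pi_apply k)

lemma measurable_codeF (n : Fin N) : Measurable fun y : Fin N → I => codeF y n := by
  have : (fun y : Fin N → I => codeF y n)
      = fun y => ∑ k : Fin N, if k < n ∧ (y k : ℝ) < (y n : ℝ) then 1 else 0 := by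
    funext y
    exact Finset.card_filter _ _
  rw [this]
  refine Finset.measurable_sum _ fun k _ => ?_
  by_cases hk : k < n
  · simp only [hk, true_and]
    exact Measurable.ite (measurableSet_lt (measurable_coord k) (measurable_coord n))
      measurable_const measurable_const
  · simp [hk]

lemma measurableSet_codeF (n : Fin N) (m : ℕ) :
    MeasurableSet {y : Fin N → I | codeF y n = m} :=
  measurable_codeF n (measurableSet_singleton m)

def Aset (sg : Equiv.Perm (Fin N)) : Set (Fin N → I) :=
  {y | StrictMono fun i => (y (sg i) : ℝ)}

lemma measurableSet_Aset (sg : Equiv.Perm (Fin N)) : MeasurableSet (Aset sg) := by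
  have : Aset sg = ⋂ (a : Fin N) (b : Fin N) (_ : a < b),
      {y : Fin N → I | (y (sg a) : ℝ) < (y (sg b) : ℝ)} := by
    ext y
    simp only [Aset, Set.mem_setOf_eq, Set.mem_iInter, StrictMono]
  rw [this]
  exact MeasurableSet.iInter fun a => MeasurableSet.iInter fun b => MeasurableSet.iInter fun _ =>
    measurableSet_lt (measurable_coord (sg a)) (measurable_coord (sg b))

lemma codeF_eq_permCode {sg : Equiv.Perm (Fin N)} {y : Fin N → I} (hy : y ∈ Aset sg) (n : Fin N) :
    codeF y n = permCode sg.symm n := by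
  unfold codeF permCode
  congr 1
  refine Finset.filter_congr fun k _ => ?_
  have hval : ∀ a : Fin N, (y a : ℝ) = (fun i => (y (sg i) : ℝ)) (sg.symm a) := by
    intro a; simp
  rw [hval k, hval n]
  exact and_congr_right fun _ => hy.lt_iff_lt

lemma measure_Aset (sg : Equiv.Perm (Fin N)) :
    (Measure.pi fun _ : Fin N => (volume : Measure I)) (Aset sg)
      = (Measure.pi fun _ : Fin N => (volume : Measure I)) (Aset 1) := by
  have key : ∀ tu : Equiv.Perm (Fin N),
      (Measure.pi fun _ : Fin N => (volume : Measure I)) (Aset tu.symm)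
        = (Measure.pi fun _ : Fin N => (volume : Measure I)) (Aset 1) := by
    intro tu
    have mp := measurePreserving_piCongrLeft (fun _ : Fin N => (volume : Measure I))
      (tu : Fin N ≃ Fin N)
    have hTy : ∀ (y : Fin N → I) (i : Fin N),
        (MeasurableEquiv.piCongrLeft (fun _ : Fin N => I) (tu : Fin N ≃ Fin N)) y i
          = y (tu.symm i) := by
      intro y i
      rw [MeasurableEquiv.coe_piCongrLeft]
      conv_lhs => rw [show i = (tu : Fin N ≃ Fin N) (tu.symm i) by simp]
      rw [Equiv.piCongrLeft_apply_apply]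
    have hpre : (MeasurableEquiv.piCongrLeft (fun _ : Fin N => I) (tu : Fin N ≃ Fin N)) ⁻¹' (Aset 1)
        = Aset tu.symm := by
      ext y
      simp only [Set.mem_preimage, Aset, Set.mem_setOf_eq, hTy, Equiv.Perm.coe_one, id_eq]
    rw [← hpre]
    exact mp.measure_preimage (measurableSet_Aset 1).nullMeasurableSet
  have h2 := key sg.symm
  simpa using h2

lemma pair_diag_null {i j : Fin N} (hij : i ≠ j) :
    (Measure.pi fun _ : Fin N => (volume : Measure I))
      {y : Fin N → I | (y i : ℝ) = (y j : ℝ)} = 0 := by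
  classical
  set Phi : (Fin N → I) → I × I := fun y => (y i, y j) with hPhi
  have hPhiM : Measurable Phi := (measurable_pi_apply i).prodMk (measurable_pi_apply j)
  have hmap : (Measure.pi fun _ : Fin N => (volume : Measure I)).map Phi
      = (volume : Measure I).prod volume := by
    refine (Measure.prod_eq (μ := (volume : Measure I)) (ν := (volume : Measure I)) fun s t hs ht => ?_).symm
    rw [Measure.map_apply hPhiM (hs.prod ht)]
    have hpre : Phi ⁻¹' (s ×ˢ t)
        = Set.pi Set.univ (fun k => if k = i then s else if k = j then t else Set.univ) := by
      ext y
      simp only [Set.mem_preimage, Set.mem_prod, Set.mem_pi, Set.mem_univ, true_implies, hPhi]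
      constructor
      · rintro ⟨h1, h2⟩ k
        by_cases hk : k = i
        · subst hk; simp [h1]
        · by_cases hk' : k = j
          · subst hk'; simp [hk, h2]
          · simp [hk, hk']
      · intro h
        constructor
        · have := h i; simpa using this
        · have := h j; simpa [hij.symm] using this
    rw [hpre, Measure.pi_pi]
    have : ∀ k : Fin N,
        (volume : Measure I) (if k = i then s else if k = j then t else Set.univ)
          = if k = i then volume s else if k = j then volume t else 1 := by
      intro k
      by_cases hk : k = i
      · simp [hk]
      · by_cases hk' : k = j
        · subst hk'; simp [hij.symm, hk]
        · simp [hk, hk']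
    simp_rw [this]
    rw [← Finset.prod_subset (Finset.subset_univ ({i, j} : Finset (Fin N)))]
    · rw [Finset.prod_pair hij]
      simp [hij.symm]
    · intro k _ hk
      simp only [Finset.mem_insert, Finset.mem_singleton, not_or] at hk
      simp [hk.1, hk.2]
  have hD : MeasurableSet {p : I × I | (p.1 : ℝ) = (p.2 : ℝ)} :=
    measurableSet_eq_fun (continuous_subtype_val.measurable.comp measurable_fst)
      (continuous_subtype_val.measurable.comp measurable_snd)
  have hset : {y : Fin N → I | (y i : ℝ) = (y j : ℝ)}
      = Phi ⁻¹' {p : I × I | (p.1 : ℝ) = (p.2 : ℝ)} := rfl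
  rw [hset, ← Measure.map_apply hPhiM hD, hmap, Measure.prod_apply (μ := (volume : Measure I)) (ν := (volume : Measure I)) hD]
  have : ∀ a : I, (volume : Measure I) (Prod.mk a ⁻¹' {p : I × I | (p.1 : ℝ) = (p.2 : ℝ)}) = 0 := by
    intro a
    have : (Prod.mk a ⁻¹' {p : I × I | (p.1 : ℝ) = (p.2 : ℝ)}) = {b : I | b = a} := by
      ext b
      simp only [Set.mem_preimage, Set.mem_setOf_eq]
      constructor
      · intro h; exact Subtype.ext h.symm
      · intro h; exact (congrArg _ h).symm
    rw [this, Set.setOf_eq_eq_singleton]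
    exact measure_singleton a
  have hz : ∀ x : I, (volume : Measure I) {a : I | (x : ℝ) = (a : ℝ)} = 0 := by
    intro x
    have hxx : {a : I | (x : ℝ) = (a : ℝ)} = {x} := by
      ext b
      simp only [Set.mem_setOf_eq, Set.mem_singleton_iff]
      exact ⟨fun h => (Subtype.ext h).symm, fun h => by rw [h]⟩
    rw [hxx]
    exact measure_singleton x
  simp [this, hz]

lemma Aset_disjoint : Pairwise fun sg tu : Equiv.Perm (Fin N) => Disjoint (Aset sg) (Aset tu) := by
  intro sg tu hne
  rw [Set.disjoint_left]
  intro y hys hyt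
  apply hne
  haveI : WellFoundedLT (Fin N) := inferInstance
  have hf : StrictMono fun i => (y (sg i) : ℝ) := hys
  have hg : StrictMono fun i => (y (tu i) : ℝ) := hyt
  have hran : Set.range (fun i => (y (sg i) : ℝ)) = Set.range (fun i => (y (tu i) : ℝ)) := by
    have h1 : (fun i => (y (sg i) : ℝ)) = (fun k => (y k : ℝ)) ∘ sg := rfl
    have h2 : (fun i => (y (tu i) : ℝ)) = (fun k => (y k : ℝ)) ∘ tu := rfl
    rw [h1, h2, Set.range_comp, Set.range_comp, Equiv.range_eq_univ, Equiv.range_eq_univ]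
  have heq : (fun i => (y (sg i) : ℝ)) = (fun i => (y (tu i) : ℝ)) :=
    Set.range_injOn_strictMono (β := Fin N) (γ := ℝ) hf hg hran
  have hyinj : Function.Injective fun k : Fin N => (y k : ℝ) := by
    intro a b hab
    have ha := congrFun heq (sg.symm a)
    rcases sg.surjective a with ⟨a', rfl⟩
    rcases sg.surjective b with ⟨b', rfl⟩
    have : (fun i => (y (sg i) : ℝ)) a' = (fun i => (y (sg i) : ℝ)) b' := hab
    rw [hf.injective this]
  ext i
  have := congrFun heq i
  exact congrArg Fin.val (hyinj (by exact this))

lemma Aset_cover {y : Fin N → I} (hy : Function.Injective fun k : Fin N => (y k : ℝ)) :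
    ∃ sg : Equiv.Perm (Fin N), y ∈ Aset sg := by
  refine ⟨Tuple.sort (fun k => (y k : ℝ)), ?_⟩
  exact (Tuple.monotone_sort _).strictMono_of_injective (hy.comp (Equiv.injective _))

lemma not_inj_null :
    (Measure.pi fun _ : Fin N => (volume : Measure I))
      {y : Fin N → I | ¬ Function.Injective fun k : Fin N => (y k : ℝ)} = 0 := by
  have hsub : {y : Fin N → I | ¬ Function.Injective fun k : Fin N => (y k : ℝ)}
      ⊆ ⋃ (p : Fin N × Fin N) (_ : p.1 ≠ p.2), {y : Fin N → I | (y p.1 : ℝ) = (y p.2 : ℝ)} := by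
    intro y hy
    simp only [Set.mem_setOf_eq, Function.Injective, not_forall] at hy
    obtain ⟨a, b, hab, hne⟩ := hy
    exact Set.mem_iUnion.2 ⟨(a, b), Set.mem_iUnion.2 ⟨hne, hab⟩⟩
  refine measure_mono_null hsub (measure_iUnion_null fun p => ?_)
  by_cases hp : p.1 = p.2
  · simp [hp]
  · simp only [ne_eq, hp, not_false_eq_true, Set.iUnion_true]
    exact pair_diag_null hp

lemma measure_Aset_one :
    (Measure.pi fun _ : Fin N => (volume : Measure I)) (Aset (1 : Equiv.Perm (Fin N)))
      = ((N.factorial : ℝ≥0∞))⁻¹ := by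
  classical
  set P := Measure.pi fun _ : Fin N => (volume : Measure I) with hP
  have hunion : P (⋃ sg : Equiv.Perm (Fin N), Aset sg) = 1 := by
    have hle1 : P (⋃ sg : Equiv.Perm (Fin N), Aset sg) ≤ 1 := prob_le_one
    have hge : (1 : ℝ≥0∞) ≤ P (⋃ sg : Equiv.Perm (Fin N), Aset sg) := by
      have hcov : (Set.univ : Set (Fin N → I))
          ⊆ (⋃ sg : Equiv.Perm (Fin N), Aset sg)
            ∪ {y : Fin N → I | ¬ Function.Injective fun k : Fin N => (y k : ℝ)} := by
        intro y _
        by_cases hy : Function.Injective fun k : Fin N => (y k : ℝ)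
        · obtain ⟨sg, hsg⟩ := Aset_cover hy
          exact Or.inl (Set.mem_iUnion.2 ⟨sg, hsg⟩)
        · exact Or.inr hy
      calc (1 : ℝ≥0∞) = P Set.univ := measure_univ.symm
        _ ≤ P ((⋃ sg : Equiv.Perm (Fin N), Aset sg)
            ∪ {y : Fin N → I | ¬ Function.Injective fun k : Fin N => (y k : ℝ)}) :=
          measure_mono hcov
        _ ≤ P (⋃ sg : Equiv.Perm (Fin N), Aset sg)
            + P {y : Fin N → I | ¬ Function.Injective fun k : Fin N => (y k : ℝ)} :=
          measure_union_le _ _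
        _ = P (⋃ sg : Equiv.Perm (Fin N), Aset sg) := by rw [not_inj_null, add_zero]
    exact le_antisymm hle1 hge
  have hsum : P (⋃ sg : Equiv.Perm (Fin N), Aset sg)
      = ∑ sg : Equiv.Perm (Fin N), P (Aset sg) := by
    rw [measure_iUnion Aset_disjoint (fun sg => measurableSet_Aset sg), tsum_fintype]
  have hconst : ∑ sg : Equiv.Perm (Fin N), P (Aset sg)
      = (Fintype.card (Equiv.Perm (Fin N))) * P (Aset 1) := by
    rw [Finset.sum_congr rfl fun sg _ => measure_Aset sg, Finset.sum_const, nsmul_eq_mul,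
      Finset.card_univ]
  have hcard : (Fintype.card (Equiv.Perm (Fin N)) : ℝ≥0∞) = (N.factorial : ℝ≥0∞) := by
    rw [Fintype.card_perm, Fintype.card_fin]
  have hmain : (N.factorial : ℝ≥0∞) * P (Aset 1) = 1 := by
    rw [← hcard, ← hconst, ← hsum, hunion]
  have hne : (N.factorial : ℝ≥0∞) ≠ 0 := by
    simp [Nat.factorial_ne_zero]
  have hnetop : (N.factorial : ℝ≥0∞) ≠ ⊤ := ENNReal.natCast_ne_top _
  calc P (Aset 1) = ((N.factorial : ℝ≥0∞))⁻¹ * ((N.factorial : ℝ≥0∞) * P (Aset 1)) := by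
        rw [← mul_assoc, ENNReal.inv_mul_cancel hne hnetop, one_mul]
    _ = ((N.factorial : ℝ≥0∞))⁻¹ := by rw [hmain, mul_one]

noncomputable def Lmap : Equiv.Perm (Fin N) → ∀ n : Fin N, Fin ((n : ℕ) + 1) :=
  fun sg n => ⟨permCode sg.symm n, Nat.lt_succ_of_le (permCode_le _ _)⟩

lemma Lmap_bijective : Function.Bijective (Lmap (N := N)) := by
  rw [Fintype.bijective_iff_injective_and_card]
  constructor
  · intro sg tu h
    have h2 : ∀ n, permCode sg.symm n = permCode tu.symm n := by
      intro n
      have := congrFun h n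
      exact congrArg Fin.val this
    have h3 := permCode_injective _ _ h2
    have h4 := congrArg Equiv.symm h3
    simpa using h4
  · rw [Fintype.card_perm, Fintype.card_fin, Fintype.card_pi]
    simp only [Fintype.card_fin]
    rw [Fin.prod_univ_eq_prod_range (fun i => i + 1) N]
    exact Finset.prod_range_add_one_eq_factorial N |>.symm ▸ rfl

lemma core_measure (c : ∀ n : Fin N, Fin ((n : ℕ) + 1)) :
    (Measure.pi fun _ : Fin N => (volume : Measure I))
      {y : Fin N → I | ∀ n, codeF y n = (c n : ℕ)}
      = ∏ n : Fin N, (((n : ℕ) : ℝ≥0∞) + 1)⁻¹ := by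
  classical
  set P := Measure.pi fun _ : Fin N => (volume : Measure I) with hP
  obtain ⟨sgc, hsgc⟩ := Lmap_bijective.surjective c
  set F := {y : Fin N → I | ∀ n, codeF y n = (c n : ℕ)} with hF
  have hsub1 : Aset sgc ⊆ F := by
    intro y hy n
    rw [codeF_eq_permCode hy n, ← hsgc]
    rfl
  have hsub2 : ∀ sg : Equiv.Perm (Fin N), ∀ y ∈ F ∩ Aset sg, sg = sgc := by
    intro sg y hy
    apply Lmap_bijective.injective
    rw [hsgc]
    funext n
    apply Fin.ext
    have h1 : codeF y n = permCode sg.symm n := codeF_eq_permCode hy.2 n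
    have h2 : codeF y n = (c n : ℕ) := hy.1 n
    simp only [Lmap]
    omega
  have hle1 : P (Aset sgc) ≤ P F := measure_mono hsub1
  have hle2 : P F ≤ P (Aset sgc) := by
    have hsub : F ⊆ Aset sgc ∪ {y : Fin N → I | ¬ Function.Injective fun k : Fin N => (y k : ℝ)} := by
      intro y hy
      by_cases hinj : Function.Injective fun k : Fin N => (y k : ℝ)
      · obtain ⟨sg, hsg⟩ := Aset_cover hinj
        have := hsub2 sg y ⟨hy, hsg⟩
        exact Or.inl (this ▸ hsg)
      · exact Or.inr hinj
    calc P F ≤ P (Aset sgc ∪ _) := measure_mono hsub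
      _ ≤ P (Aset sgc) + P {y : Fin N → I | ¬ Function.Injective fun k : Fin N => (y k : ℝ)} :=
        measure_union_le _ _
      _ = P (Aset sgc) := by rw [not_inj_null, add_zero]
  have hPF : P F = ((N.factorial : ℝ≥0∞))⁻¹ := by
    rw [le_antisymm hle2 hle1, measure_Aset sgc, measure_Aset_one]
  rw [hPF]
  have hprod : ∏ n : Fin N, (((n : ℕ) : ℝ≥0∞) + 1)⁻¹
      = (∏ n : Fin N, (((n : ℕ) : ℝ≥0∞) + 1))⁻¹ := by
    rw [ENNReal.prod_inv_distrib]
    intro a _ b _ _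
    left
    exact (zero_lt_one.trans_le le_add_self).ne'
  rw [hprod]
  congr 1
  have : ∀ n : Fin N, (((n : ℕ) : ℝ≥0∞) + 1) = (((n : ℕ) + 1 : ℕ) : ℝ≥0∞) := by
    intro n; push_cast; ring
  rw [Finset.prod_congr rfl fun n _ => this n, ← Nat.cast_prod]
  rw [Fin.prod_univ_eq_prod_range (fun i => i + 1) N]
  rw [Finset.prod_range_add_one_eq_factorial N]

end Core



instance uniformFin_prob (n : ℕ) : IsProbabilityMeasure (uniformFin n) :=
  PMF.toMeasure.isProbabilityMeasure _

lemma uniformFin_singleton (n : ℕ) (a : Fin (n + 1)) :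
    uniformFin n {a} = (((n : ℝ≥0∞)) + 1)⁻¹ := by
  rw [uniformFin, PMF.toMeasure_apply_singleton _ _ (measurableSet_singleton _),
    PMF.uniformOfFintype_apply]
  simp

lemma measurable_coordNat (k : ℕ) : Measurable fun x : ℕ → I => (x k : ℝ) :=
  continuous_subtype_val.measurable.comp (measurable_pi_apply k)

lemma measurable_tCode (n : ℕ) : Measurable fun x : ℕ → I => tCode x n := by
  have h : (fun x : ℕ → I => tCode x n)
      = fun x => ∑ k ∈ Finset.range n, if (x k : ℝ) < (x n : ℝ) then 1 else 0 := by
    funext x; exact Finset.card_filter _ _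
  rw [h]
  refine Finset.measurable_sum _ fun k _ => ?_
  exact Measurable.ite (measurableSet_lt (measurable_coordNat k) (measurable_coordNat n))
    measurable_const measurable_const

lemma measurable_JCode : Measurable JCode := by
  rw [measurable_pi_iff]
  intro n
  apply measurable_to_countable'
  intro y
  have h : (fun x => JCode x n) ⁻¹' {y} = (fun x : ℕ → I => tCode x n) ⁻¹' {(y : ℕ)} := by
    ext x
    simp [JCode, Fin.ext_iff]
  rw [h]
  exact measurable_tCode n (measurableSet_singleton _)

lemma tCode_eq {N : ℕ} (x : ℕ → I) (n : ℕ) (h : n < N) :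
    tCode x n = codeF (fun i : Fin N => x i) ⟨n, h⟩ := by
  unfold tCode codeF
  refine Finset.card_bij' (fun k hk => (⟨k, lt_trans (Finset.mem_range.1 (Finset.mem_filter.1 hk).1) h⟩ : Fin N))
    (fun k _ => (k : ℕ)) ?_ ?_ ?_ ?_
  · intro a ha
    simp only [Finset.mem_filter, Finset.mem_range] at ha
    simp only [Finset.mem_filter, Finset.mem_univ, true_and]
    exact ⟨by simpa [Fin.lt_def] using ha.1, ha.2⟩
  · intro b hb
    simp only [Finset.mem_filter, Finset.mem_univ, true_and, Fin.lt_def] at hb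
    simp only [Finset.mem_filter, Finset.mem_range]
    exact ⟨hb.1, hb.2⟩
  · intro a ha; rfl
  · intro b hb; rfl

lemma map_restrict₂_pi {J K : Finset ℕ} (h : J ⊆ K) {α : ℕ → Type*}
    [∀ n, MeasurableSpace (α n)] (ν : ∀ n, Measure (α n)) [∀ n, IsProbabilityMeasure (ν n)] :
    (Measure.pi fun k : K => ν k).map (Finset.restrict₂ h) = Measure.pi fun j : J => ν j := by
  classical
  refine (Measure.pi_eq fun s hs => ?_).symm
  rw [Measure.map_apply (Finset.measurable_restrict₂ h) (MeasurableSet.univ_pi hs)]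
  have hpre : Finset.restrict₂ (π := fun n => α n) h ⁻¹' (Set.univ.pi s)
      = Set.univ.pi (fun k : K => if hk : (k : ℕ) ∈ J then s ⟨k, hk⟩ else Set.univ) := by
    ext y
    simp only [Set.mem_preimage, Set.mem_pi, Set.mem_univ, true_implies]
    constructor
    · intro hy k
      by_cases hk : (k : ℕ) ∈ J
      · rw [dif_pos hk]
        exact hy ⟨(k : ℕ), hk⟩
      · rw [dif_neg hk]; trivial
    · intro hy j
      have h2 := hy ⟨(j : ℕ), h j.2⟩
      rw [dif_pos (show ((⟨(j : ℕ), h j.2⟩ : K) : ℕ) ∈ J from j.2)] at h2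
      exact h2
  rw [hpre, Measure.pi_pi]
  set g : ℕ → ℝ≥0∞ := fun n => if hn : n ∈ J then ν n (s ⟨n, hn⟩) else 1 with hg
  have claim1 : ∀ k : K, (ν k) (if hk : (k : ℕ) ∈ J then s ⟨k, hk⟩ else Set.univ) = g k := by
    intro k
    by_cases hk : (k : ℕ) ∈ J
    · simp only [hg, dif_pos hk]
    · simp only [hg, dif_neg hk]; exact measure_univ
  calc ∏ k : K, (ν k) (if hk : (k : ℕ) ∈ J then s ⟨k, hk⟩ else Set.univ)
      = ∏ k ∈ K.attach, g k := by
        rw [← Finset.univ_eq_attach]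
        exact Finset.prod_congr rfl fun k _ => claim1 k
    _ = ∏ n ∈ K, g n := Finset.prod_attach K g
    _ = ∏ n ∈ J, g n := (Finset.prod_subset h (fun n _ hn => by simp only [hg, dif_neg hn])).symm
    _ = ∏ j ∈ J.attach, g j := (Finset.prod_attach J g).symm
    _ = ∏ j : J, (ν j) (s j) := by
        rw [← Finset.univ_eq_attach]
        refine Finset.prod_congr rfl fun j _ => ?_
        simp only [hg, dif_pos j.2]

-- continuing: map_rN and mainA (with placeholders for core_measure etc.)
section Glue

variable {N : ℕ}

def eFin (N : ℕ) : Fin N ≃ (Finset.range N : Finset ℕ) where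
  toFun i := ⟨(i : ℕ), Finset.mem_range.2 i.2⟩
  invFun j := ⟨(j : ℕ), Finset.mem_range.1 j.2⟩
  left_inv i := rfl
  right_inv j := rfl

lemma map_rN (μ : Measure (ℕ → I)) (hμ : IsProductLebesgue μ) (N : ℕ) :
    μ.map (fun x (i : Fin N) => x (i : ℕ)) = Measure.pi fun _ : Fin N => (volume : Measure I) := by
  have h1 := hμ (Finset.range N)
  set f : {x // x ∈ Finset.range N} ≃ Fin N := (eFin N).symm with hf
  set T := MeasurableEquiv.piCongrLeft (fun _ : Fin N => I) f with hT
  have mp := measurePreserving_piCongrLeft (fun _ : Fin N => (volume : Measure I)) f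
  have hTy : ∀ (y : {x // x ∈ Finset.range N} → I) (i : Fin N), T y i = y (eFin N i) := by
    intro y i
    have h2 : T y (f (f.symm i)) = y (f.symm i) := by
      rw [hT, MeasurableEquiv.coe_piCongrLeft]
      exact Equiv.piCongrLeft_apply_apply (P := fun _ : Fin N => I) (e := f) y (f.symm i)
    simpa [hf] using h2
  have hcomp : (fun (x : ℕ → I) (i : Fin N) => x (i : ℕ)) = T ∘ (Finset.range N).restrict := by
    funext x
    funext i
    rw [Function.comp_apply, hTy]
    rfl
  rw [hcomp, ← Measure.map_map T.measurable (Finset.measurable_restrict _), h1, mp.map_eq]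

end Glue


section Main

lemma measurable_rN (N : ℕ) : Measurable fun (x : ℕ → I) (i : Fin N) => x (i : ℕ) :=
  measurable_pi_lambda _ fun i => measurable_pi_apply _

lemma mainA (μ : Measure (ℕ → I)) (hμ : IsProductLebesgue μ) (N : ℕ) :
    (μ.map JCode).map ((Finset.range N).restrict)
      = Measure.pi fun j : (Finset.range N) => uniformFin (j : ℕ) := by
  rw [Measure.map_map (Finset.measurable_restrict _) measurable_JCode]
  refine MeasureTheory.Measure.ext_of_singleton fun c => ?_
  rw [Measure.map_apply ((Finset.measurable_restrict _).comp measurable_JCode)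
    (measurableSet_singleton c)]
  have hGmeas : MeasurableSet {y : Fin N → I | ∀ n : Fin N, codeF y n = (c (eFin N n) : ℕ)} := by
    have h : {y : Fin N → I | ∀ n : Fin N, codeF y n = (c (eFin N n) : ℕ)}
        = ⋂ n : Fin N, {y : Fin N → I | codeF y n = (c (eFin N n) : ℕ)} := by
      ext y
      simp [Set.mem_iInter]
    rw [h]
    exact MeasurableSet.iInter fun n => measurableSet_codeF n _
  have hpre : ((Finset.range N).restrict ∘ JCode) ⁻¹' {c}
      = (fun (x : ℕ → I) (i : Fin N) => x (i : ℕ)) ⁻¹'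
        {y : Fin N → I | ∀ n : Fin N, codeF y n = ((c (eFin N n)) : ℕ)} := by
    ext x
    simp only [Set.mem_preimage, Set.mem_singleton_iff, Set.mem_setOf_eq]
    constructor
    · intro hx n
      have h2 := congrFun hx (eFin N n)
      have h3 : tCode x (n : ℕ) = ((c (eFin N n)) : ℕ) := congrArg Fin.val h2
      rw [← tCode_eq x (n : ℕ) n.2]
      exact h3
    · intro hx
      funext j
      apply Fin.ext
      have h2 := hx ((eFin N).symm j)
      rw [← tCode_eq x _ (((eFin N).symm j)).2] at h2
      have h4 : eFin N ((eFin N).symm j) = j := (eFin N).apply_symm_apply j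
      rw [h4] at h2
      exact h2
  rw [hpre, ← Measure.map_apply (measurable_rN N) hGmeas, map_rN μ hμ N,
    core_measure (fun n : Fin N => c (eFin N n))]
  rw [show ({c} : Set (∀ j : (Finset.range N), Fin ((j : ℕ) + 1)))
      = Set.univ.pi (fun j => {c j}) from (Set.univ_pi_singleton c).symm, Measure.pi_pi]
  rw [Finset.prod_congr rfl fun (j : {x // x ∈ Finset.range N}) _ => uniformFin_singleton (j : ℕ) (c j)]
  exact Fintype.prod_equiv (eFin N) _ _ (fun n => rfl)

end Main

/-- The encoding `J(x) = (t_n(x))_n` is measurable and pushes the infinite product of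
Lebesgue measures forward to the product of the uniform measures on the factors `{0,…,n}`
(the latter characterized as the projective limit of the finite products of uniform measures);
i.e. the `t_n` are mutually independent and `t_n` is uniform on `{0,…,n-1}`. -/
theorem JCode_measurable_and_map_eq_product_uniform
    (μ : Measure (ℕ → I)) (hμ : IsProductLebesgue μ) :
    Measurable JCode ∧
      IsProjectiveLimit (μ.map JCode)
        (fun J : Finset ℕ => Measure.pi fun n : J => uniformFin n) := by
  refine ⟨measurable_JCode, ?_⟩
  intro J
  have hJN : J ⊆ Finset.range ((J.sup id) + 1) := by
    intro j hj
    exact Finset.mem_range.2 (Nat.lt_succ_of_le (Finset.le_sup (f := id) hj))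
  have hcomp : (J.restrict (π := fun n => Fin (n + 1)))
      = Finset.restrict₂ hJN ∘ (Finset.range ((J.sup id) + 1)).restrict :=
    (Finset.restrict₂_comp_restrict hJN).symm
  rw [hcomp, ← Measure.map_map (Finset.measurable_restrict₂ hJN) (Finset.measurable_restrict _),
    mainA μ hμ _, map_restrict₂_pi hJN uniformFin]
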